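/- Let Σ be a positive definite real p×p matrix whose inverse P = Σ⁻¹ has an acyclic sparsity graph (a forest), let S be the diagonal matrix with entries S_{jj} = 1/P_{jj}, and assume the 2p×2p block matrix underline-Σ = [[Σ, Σ−S],[Σ−S, Σ]] is invertible. Then for every j ∈ {1,…,p}, the (j,j) entry of (underline-Σ)⁻¹ equals (P_{jj})² · Σ_{jj}. -/

import Mathlib

open Matrix

section ForestSign

open SimpleGraph Walk

/-- Any two paths between the same endpoints in an acyclic graph have equal length. -/
private lemma forest_path_length_unique {V : Type*} {G : SimpleGraph V} (hforest : G.IsAcyclic)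
    {a b : V} (p q : G.Walk a b) (hp : p.IsPath) (hq : q.IsPath) : p.length = q.length := by
  have h := hforest.path_unique ⟨p, hp⟩ ⟨q, hq⟩
  simpa using congrArg (fun r : G.Path a b => (r : G.Walk a b).length) h

/-- In an acyclic graph, the lengths of paths from a common vertex to two adjacent
vertices differ by exactly one. -/
private lemma forest_step {V : Type*} [DecidableEq V] {G : SimpleGraph V}
    (hforest : G.IsAcyclic) {r u v : V} (h : G.Adj u v) (p : G.Walk r u) (q : G.Walk r v)
    (hp : p.IsPath) (hq : q.IsPath) :
    q.length = p.length + 1 ∨ p.length = q.length + 1 := by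
  by_cases hv : v ∈ p.support
  · right
    have h1 : q.length = (p.takeUntil v hv).length :=
      forest_path_length_unique hforest q _ hq (hp.takeUntil hv)
    have h2 : (p.dropUntil v hv).length = 1 := by
      have h3 : (Walk.cons h.symm Walk.nil : G.Walk v u).IsPath :=
        (SimpleGraph.Path.singleton h.symm).2
      have := forest_path_length_unique hforest (p.dropUntil v hv)
        (Walk.cons h.symm Walk.nil) (hp.dropUntil hv) h3
      simpa using this
    have h3 : (p.takeUntil v hv).length + (p.dropUntil v hv).length = p.length := by
      rw [← Walk.length_append, Walk.take_spec]
    omega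
  · left
    have hp' : ((Walk.cons h.symm p.reverse).reverse : G.Walk r v).IsPath := by
      apply Walk.IsPath.reverse
      apply hp.reverse.cons
      simpa using hv
    have := forest_path_length_unique hforest q _ hq hp'
    simp only [Walk.length_reverse, Walk.length_cons] at this
    omega

/-- A forest admits a `±1` labelling whose product along each edge is `-1`
(i.e. forests are bipartite). -/
private lemma forest_sign {V : Type*} [DecidableEq V] {G : SimpleGraph V}
    (hforest : G.IsAcyclic) :
    ∃ f : V → ℝ, (∀ v, f v * f v = 1) ∧ ∀ u v, G.Adj u v → f u * f v = -1 := by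
  classical
  have hsq : ∀ n : ℕ, (-1 : ℝ) ^ n * (-1) ^ n = 1 := by
    intro n
    rw [← pow_add]
    exact Even.neg_one_pow ⟨n, rfl⟩
  set root : V → V := fun v => (G.connectedComponentMk v).out with hroot_def
  have hreach : ∀ v, G.Reachable (root v) v := fun v =>
    SimpleGraph.ConnectedComponent.exact ((G.connectedComponentMk v).out_eq)
  set pw : ∀ v, G.Walk (root v) v := fun v => (hreach v).some.bypass with hpw_def
  have hpw : ∀ v, (pw v).IsPath := fun v => Walk.bypass_isPath _
  set len : V → ℕ := fun v => (pw v).length with hlen_def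
  refine ⟨fun v => (-1 : ℝ) ^ (len v), fun v => hsq _, ?_⟩
  intro u v h
  have hroots : root u = root v :=
    congrArg Quot.out (SimpleGraph.ConnectedComponent.sound h.reachable)
  have hstep := forest_step hforest h ((pw u).copy hroots rfl) (pw v)
    ((Walk.isPath_copy _ _ _).2 (hpw u)) (hpw v)
  rw [Walk.length_copy] at hstep
  rcases hstep with h1 | h1
  · show (-1 : ℝ) ^ ((pw u).length) * (-1) ^ ((pw v).length) = -1
    rw [h1, pow_succ]
    linear_combination (-1 : ℝ) * hsq ((pw u).length)
  · show (-1 : ℝ) ^ ((pw u).length) * (-1) ^ ((pw v).length) = -1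
    rw [h1, pow_succ]
    linear_combination (-1 : ℝ) * hsq ((pw v).length)

end ForestSign

/-- Theorem 6: for the conditional independence knockoff on a tree (forest)
Gaussian graphical model, the diagonal entries of the extended precision matrix
are `P_jj² · Σ_jj`. -/
theorem stmt10 {p : ℕ} (Sigma : Matrix (Fin p) (Fin p) ℝ) (hSigma : Sigma.PosDef)
    (P : Matrix (Fin p) (Fin p) ℝ) (hP : P = Sigma⁻¹)
    (G : SimpleGraph (Fin p)) (hG : ∀ i j, G.Adj i j ↔ i ≠ j ∧ P i j ≠ 0)
    (hforest : G.IsAcyclic)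
    (S : Matrix (Fin p) (Fin p) ℝ) (hS : S = Matrix.diagonal (fun j => (P j j)⁻¹))
    (hinv : IsUnit (Matrix.fromBlocks Sigma (Sigma - S) (Sigma - S) Sigma).det) :
    ∀ j : Fin p,
      (Matrix.fromBlocks Sigma (Sigma - S) (Sigma - S) Sigma)⁻¹ (Sum.inl j) (Sum.inl j) =
        (P j j) ^ 2 * Sigma j j := by
  classical
  -- the precision matrix is positive definite, so its diagonal entries are nonzero
  have hPD : P.PosDef := by rw [hP]; exact hSigma.inv
  have hPjj : ∀ j, P j j ≠ 0 := by
    intro j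
    have hx : (Pi.single j 1 : Fin p → ℝ) ≠ 0 := by
      intro hcon
      have := congrFun hcon j
      simp at this
    have := hPD.dotProduct_mulVec_pos hx
    have hval : dotProduct (star (Pi.single j 1 : Fin p → ℝ)) (P *ᵥ Pi.single j 1) = P j j := by
      simp [dotProduct, Matrix.mulVec, Pi.single_apply, Finset.sum_ite_eq, mul_comm]
    rw [hval] at this
    exact this.ne'
  -- basic matrix identities
  have hSigdet : IsUnit Sigma.det := hSigma.det_pos.ne'.isUnit
  have hSigP : Sigma * P = 1 := by rw [hP]; exact Matrix.mul_nonsing_inv _ hSigdet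
  have hPSig : P * Sigma = 1 := by rw [hP]; exact Matrix.nonsing_inv_mul _ hSigdet
  set D : Matrix (Fin p) (Fin p) ℝ := Matrix.diagonal (fun j => P j j) with hD_def
  have hSD : S * D = 1 := by
    rw [hS, hD_def, Matrix.diagonal_mul_diagonal,
      show (fun i => (P i i)⁻¹ * P i i) = fun _ => (1 : ℝ) from
        funext fun i => inv_mul_cancel₀ (hPjj i), Matrix.diagonal_one]
  have hDS : D * S = 1 := by
    rw [hS, hD_def, Matrix.diagonal_mul_diagonal,
      show (fun i => P i i * (P i i)⁻¹) = fun _ => (1 : ℝ) from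
        funext fun i => mul_inv_cancel₀ (hPjj i), Matrix.diagonal_one]
  -- the sign labelling of the forest
  obtain ⟨f, hf1, hf2⟩ := forest_sign hforest
  set E : Matrix (Fin p) (Fin p) ℝ := Matrix.diagonal f with hE_def
  have hEE : E * E = 1 := by
    rw [hE_def, Matrix.diagonal_mul_diagonal,
      show (fun i => f i * f i) = fun _ => (1 : ℝ) from funext fun i => hf1 i,
      Matrix.diagonal_one]
  have hES : E * S = S * E := by
    rw [hS, hE_def, Matrix.diagonal_mul_diagonal, Matrix.diagonal_mul_diagonal]
    exact congrArg Matrix.diagonal (funext fun i => mul_comm _ _)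
  have hED : E * D = D * E := by
    rw [hD_def, hE_def, Matrix.diagonal_mul_diagonal, Matrix.diagonal_mul_diagonal]
    exact congrArg Matrix.diagonal (funext fun i => mul_comm _ _)
  -- the key identity `E * P * E = 2 • D - P`, written without scalar multiplication
  have hEPE : E * P * E = D + D - P := by
    rw [hE_def, hD_def]
    ext i j
    rw [Matrix.sub_apply, Matrix.add_apply, Matrix.mul_diagonal, Matrix.diagonal_mul,
      Matrix.diagonal_apply]
    by_cases hij : i = j
    · subst hij
      rw [if_pos rfl]
      linear_combination P i i * hf1 i
    · rw [if_neg hij]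
      by_cases hPij : P i j = 0
      · rw [hPij]; ring
      · have hadj : G.Adj i j := (hG i j).2 ⟨hij, hPij⟩
        have := hf2 i j hadj
        linear_combination P i j * this
  -- applied rewriting lemmas for products
  have l1 : ∀ X : Matrix (Fin p) (Fin p) ℝ, E * (E * X) = X := by
    intro X; rw [← Matrix.mul_assoc, hEE, Matrix.one_mul]
  have l2 : ∀ X : Matrix (Fin p) (Fin p) ℝ, S * (D * X) = X := by
    intro X; rw [← Matrix.mul_assoc, hSD, Matrix.one_mul]
  have l4 : ∀ X : Matrix (Fin p) (Fin p) ℝ, P * (Sigma * X) = X := by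
    intro X; rw [← Matrix.mul_assoc, hPSig, Matrix.one_mul]
  have l5 : ∀ X : Matrix (Fin p) (Fin p) ℝ, Sigma * (P * X) = X := by
    intro X; rw [← Matrix.mul_assoc, hSigP, Matrix.one_mul]
  have l7 : ∀ X : Matrix (Fin p) (Fin p) ℝ, S * (E * X) = E * (S * X) := by
    intro X; rw [← Matrix.mul_assoc, ← hES, Matrix.mul_assoc]
  -- `2Σ - S` in factored form
  have stepA : Sigma * (E * P * E) * S = Sigma + Sigma - S := by
    rw [hEPE, Matrix.mul_sub, Matrix.mul_add, Matrix.sub_mul, Matrix.add_mul,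
      Matrix.mul_assoc Sigma D S, hDS, Matrix.mul_one, hSigP, Matrix.one_mul]
  -- `P` in conjugated form
  have hP2 : E * (D + D - P) * E = P := by
    rw [← hEPE, ← Matrix.mul_assoc E (E * P) E, ← Matrix.mul_assoc E E P, hEE,
      Matrix.one_mul, Matrix.mul_assoc P E E, hEE, Matrix.mul_one]
  set U : Matrix (Fin p) (Fin p) ℝ := E * D * Sigma * D * E with hU_def
  -- the inverse of `2Σ - S` in factored form
  have stepB : E * D * Sigma * E * P = U + U - D := by
    rw [← hP2, ← Matrix.mul_assoc (E * D * Sigma * E) (E * (D + D - P)) E,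
      ← Matrix.mul_assoc (E * D * Sigma * E) E (D + D - P),
      Matrix.mul_assoc (E * D * Sigma) E E, hEE, Matrix.mul_one,
      Matrix.mul_sub, Matrix.mul_add, Matrix.sub_mul, Matrix.add_mul,
      Matrix.mul_assoc (E * D) Sigma P, hSigP, Matrix.mul_one,
      Matrix.mul_assoc E D E, ← hED, ← Matrix.mul_assoc E E D, hEE, Matrix.one_mul]
  have stepC : (Sigma * (E * P * E) * S) * (E * D * Sigma * E * P) = 1 := by
    simp only [Matrix.mul_assoc]
    simp only [l7, l1, l2, l4, l5, hSigP]
  have hN : (Sigma + Sigma - S) * (U + U - D) = 1 := by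
    rw [← stepA, ← stepB]; exact stepC
  -- the essential combination of products vanishes
  have h2 : (Sigma * U + Sigma * U - Sigma * D - S * U)
      + (Sigma * U + Sigma * U - Sigma * D - S * U) + S * D = 1 := by
    rw [← hN]
    simp only [Matrix.add_mul, Matrix.sub_mul, Matrix.mul_add, Matrix.mul_sub]
    abel
  rw [hSD] at h2
  have h3 : (Sigma * U + Sigma * U - Sigma * D - S * U)
      + (Sigma * U + Sigma * U - Sigma * D - S * U) = 0 := by
    have h4 : (Sigma * U + Sigma * U - Sigma * D - S * U)
        + (Sigma * U + Sigma * U - Sigma * D - S * U) + 1 = 0 + 1 := by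
      rw [h2, zero_add]
    exact add_right_cancel h4
  have hT : Sigma * U + Sigma * U - Sigma * D - S * U = 0 := by
    ext i j
    have h5 := congrFun (congrFun h3 i) j
    simp only [Matrix.add_apply, Matrix.sub_apply, Matrix.zero_apply] at h5 ⊢
    linarith
  -- the four blocks of the product of the extended covariance with its inverse
  have hTL : Sigma * U + (Sigma - S) * (U - D) = 1 := by
    have he : Sigma * U + (Sigma - S) * (U - D)
        = (Sigma * U + Sigma * U - Sigma * D - S * U) + S * D := by
      simp only [Matrix.sub_mul, Matrix.mul_sub]
      abel
    rw [he, hT, hSD, zero_add]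
  have hTR : Sigma * (U - D) + (Sigma - S) * U = 0 := by
    have he : Sigma * (U - D) + (Sigma - S) * U
        = Sigma * U + Sigma * U - Sigma * D - S * U := by
      simp only [Matrix.sub_mul, Matrix.mul_sub]
      abel
    rw [he, hT]
  have hBL : (Sigma - S) * U + Sigma * (U - D) = 0 := by rw [add_comm]; exact hTR
  have hBR : (Sigma - S) * (U - D) + Sigma * U = 1 := by rw [add_comm]; exact hTL
  have hMX : (Matrix.fromBlocks Sigma (Sigma - S) (Sigma - S) Sigma)
      * (Matrix.fromBlocks U (U - D) (U - D) U) = 1 := by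
    rw [Matrix.fromBlocks_multiply, hTL, hTR, hBL, hBR, Matrix.fromBlocks_one]
  have hMinv := Matrix.inv_eq_right_inv hMX
  intro j
  rw [hMinv, Matrix.fromBlocks_apply₁₁, hU_def, hE_def, hD_def,
    Matrix.diagonal_mul_diagonal, Matrix.mul_diagonal, Matrix.mul_diagonal,
    Matrix.diagonal_mul]
  linear_combination (P j j ^ 2 * Sigma j j) * hf1 j
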